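/- (Tropical binomial identity for traces) For any n×n matrices A and B over an idempotent commutative semifield and any integer m ≥ 1, tr((A ⊕ B)^m) = tr(B^m) ⊕ ⨁_{k=1}^{m} ⨁_{i₁+⋯+i_k = m−k, i_j ≥ 0} tr(A B^{i₁} ⋯ A B^{i_k}). -/

import Mathlib

noncomputable section

variable {K : Type*} [LinearOrderedCommGroupWithZero K]

/-- In a linearly ordered idempotent semifield the zero is the bottom element. -/
instance : OrderBot K where
  bot := 0
  bot_le _ := zero_le'

/-- Tropical matrix product over the idempotent semifield: `{AB}_{ij} = ⊕_k a_{ik} b_{kj}`. -/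
def tmul {n : ℕ} (A B : Fin n → Fin n → K) : Fin n → Fin n → K :=
  fun i j => Finset.univ.sup fun k => A i k * B k j

/-- Entrywise tropical sum of matrices. -/
def tadd {n : ℕ} (A B : Fin n → Fin n → K) : Fin n → Fin n → K :=
  fun i j => A i j ⊔ B i j

/-- The tropical identity matrix. -/
def idMat (n : ℕ) : Fin n → Fin n → K :=
  fun i j => if i = j then 1 else 0

/-- Tropical matrix power. -/
def tpow {n : ℕ} (A : Fin n → Fin n → K) : ℕ → (Fin n → Fin n → K)
  | 0 => idMat n
  | m + 1 => tmul A (tpow A m)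

/-- Tropical trace: `tr A = a₁₁ ⊕ ⋯ ⊕ aₙₙ`. -/
def ttr {n : ℕ} (A : Fin n → Fin n → K) : K :=
  Finset.univ.sup fun i => A i i

/-- The product `A B^{i₁} ⋯ A B^{i_k}` for a tuple of exponents `t : Fin k → ℕ`. -/
def prodTup {n k : ℕ} (A B : Fin n → Fin n → K) (t : Fin k → ℕ) : Fin n → Fin n → K :=
  (List.ofFn fun j => tmul A (tpow B (t j))).foldr tmul (idMat n)

/-! ### Auxiliary lemmas -/

section Aux

variable {n : ℕ}

lemma kmul_sup (a b c : K) : a * (b ⊔ c) = a * b ⊔ a * c :=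
  Monotone.map_max (f := (a * ·)) (fun _ _ h => mul_le_mul_right h a)

lemma ksup_mul (a b c : K) : (b ⊔ c) * a = b * a ⊔ c * a :=
  Monotone.map_max (f := (· * a)) (fun _ _ h => mul_le_mul_left h a)

lemma kmul_finsetSup {ι : Type*} (s : Finset ι) (f : ι → K) (a : K) :
    a * s.sup f = s.sup fun i => a * f i := by
  exact Finset.comp_sup_eq_sup_comp (a * ·) (fun x y => kmul_sup a x y)
    (by show a * 0 = (0 : K); simp)

lemma kfinsetSup_mul {ι : Type*} (s : Finset ι) (f : ι → K) (a : K) :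
    s.sup f * a = s.sup fun i => f i * a := by
  exact Finset.comp_sup_eq_sup_comp (· * a) (fun x y => ksup_mul a x y)
    (by show 0 * a = (0 : K); simp)

lemma finsetSup_sup {ι : Type*} (s : Finset ι) (f g : ι → K) :
    (s.sup fun i => f i ⊔ g i) = s.sup f ⊔ s.sup g := by
  apply le_antisymm
  · exact Finset.sup_le fun i hi =>
      sup_le_sup (Finset.le_sup hi) (Finset.le_sup hi)
  · exact sup_le (Finset.sup_mono_fun fun i _ => le_sup_left)
      (Finset.sup_mono_fun fun i _ => le_sup_right)

lemma tadd_eq_sup (A B : Fin n → Fin n → K) : tadd A B = A ⊔ B := rfl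

lemma tmul_sup_right (X M N : Fin n → Fin n → K) :
    tmul X (M ⊔ N) = tmul X M ⊔ tmul X N := by
  funext i j
  show (Finset.univ.sup fun k => X i k * (M k j ⊔ N k j)) = _
  simp only [kmul_sup]
  exact finsetSup_sup _ _ _

lemma tmul_sup_left (X M N : Fin n → Fin n → K) :
    tmul (M ⊔ N) X = tmul M X ⊔ tmul N X := by
  funext i j
  show (Finset.univ.sup fun k => (M i k ⊔ N i k) * X k j) = _
  simp only [ksup_mul]
  exact finsetSup_sup _ _ _

lemma tmul_bot_right (X : Fin n → Fin n → K) : tmul X ⊥ = ⊥ := by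
  funext i j
  show (Finset.univ.sup fun k => X i k * (0 : K)) = (0 : K)
  apply le_antisymm
  · exact Finset.sup_le fun k _ => by simp
  · exact zero_le'

lemma tmul_finsetSup_right {ι : Type*} (s : Finset ι) (X : Fin n → Fin n → K)
    (F : ι → (Fin n → Fin n → K)) :
    tmul X (s.sup F) = s.sup fun a => tmul X (F a) :=
  Finset.comp_sup_eq_sup_comp (tmul X) (tmul_sup_right X) (tmul_bot_right X)

lemma tmul_assoc (A B C : Fin n → Fin n → K) :
    tmul (tmul A B) C = tmul A (tmul B C) := by
  funext i j
  show (Finset.univ.sup fun k => (Finset.univ.sup fun l => A i l * B l k) * C k j)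
      = Finset.univ.sup fun l => A i l * Finset.univ.sup fun k => B l k * C k j
  simp only [kfinsetSup_mul, kmul_finsetSup]
  rw [Finset.sup_comm]
  simp only [mul_assoc]

lemma tmul_id_left (X : Fin n → Fin n → K) : tmul (idMat n) X = X := by
  funext i j
  show (Finset.univ.sup fun k => (if i = k then (1:K) else 0) * X k j) = X i j
  apply le_antisymm
  · refine Finset.sup_le fun k _ => ?_
    by_cases h : i = k
    · subst h; simp
    · simp [h]
  · refine le_trans ?_ (Finset.le_sup (Finset.mem_univ i))
    simp

lemma tmul_id_right (X : Fin n → Fin n → K) : tmul X (idMat n) = X := by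
  funext i j
  show (Finset.univ.sup fun k => X i k * (if k = j then (1:K) else 0)) = X i j
  apply le_antisymm
  · refine Finset.sup_le fun k _ => ?_
    by_cases h : k = j
    · subst h; simp
    · simp [h]
  · refine le_trans ?_ (Finset.le_sup (Finset.mem_univ j))
    simp

lemma tmul_le_tmul {A A' B B' : Fin n → Fin n → K} (h1 : A ≤ A') (h2 : B ≤ B') :
    tmul A B ≤ tmul A' B' := by
  intro i j
  exact Finset.sup_mono_fun fun k _ => mul_le_mul' (h1 i k) (h2 k j)

lemma tpow_mono {A B : Fin n → Fin n → K} (h : A ≤ B) (m : ℕ) :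
    tpow A m ≤ tpow B m := by
  induction m with
  | zero => exact le_rfl
  | succ m ih => exact tmul_le_tmul h ih

lemma tpow_add (C : Fin n → Fin n → K) (a b : ℕ) :
    tpow C (a + b) = tmul (tpow C a) (tpow C b) := by
  induction a with
  | zero => simp [tpow, tmul_id_left]
  | succ a ih =>
    rw [show a + 1 + b = (a + b) + 1 from by omega]
    show tmul C (tpow C (a + b)) = _
    rw [ih, ← tmul_assoc]
    rfl

lemma le_tadd_left (A B : Fin n → Fin n → K) : A ≤ tadd A B := by
  intro i j; exact le_sup_left

lemma le_tadd_right (A B : Fin n → Fin n → K) : B ≤ tadd A B := by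
  intro i j; exact le_sup_right

lemma ttr_mono {X Y : Fin n → Fin n → K} (h : X ≤ Y) : ttr X ≤ ttr Y :=
  Finset.sup_mono_fun fun i _ => h i i

lemma ttr_sup (X Y : Fin n → Fin n → K) : ttr (X ⊔ Y) = ttr X ⊔ ttr Y := by
  show (Finset.univ.sup fun i => X i i ⊔ Y i i) = _
  exact finsetSup_sup _ _ _

lemma ttr_bot : ttr (⊥ : Fin n → Fin n → K) = ⊥ := by
  show (Finset.univ.sup fun _ : Fin n => (0 : K)) = (0 : K)
  apply le_antisymm
  · exact Finset.sup_le fun _ _ => le_rfl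
  · exact zero_le'

lemma ttr_finsetSup {ι : Type*} (s : Finset ι) (F : ι → (Fin n → Fin n → K)) :
    ttr (s.sup F) = s.sup fun a => ttr (F a) :=
  Finset.comp_sup_eq_sup_comp ttr ttr_sup ttr_bot

lemma ttr_tmul_comm (X Y : Fin n → Fin n → K) : ttr (tmul X Y) = ttr (tmul Y X) := by
  show (Finset.univ.sup fun i => Finset.univ.sup fun k => X i k * Y k i)
      = Finset.univ.sup fun k => Finset.univ.sup fun i => Y k i * X i k
  rw [Finset.sup_comm]
  simp only [mul_comm]

/-! ### Words -/

/-- Product of the word of matrices given by a boolean list (`true ↦ A`, `false ↦ B`). -/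
def wordProd (A B : Fin n → Fin n → K) (l : List Bool) : Fin n → Fin n → K :=
  (l.map fun b => if b then A else B).foldr tmul (idMat n)

variable (A B : Fin n → Fin n → K)

lemma wordProd_nil : wordProd A B [] = idMat n := rfl

lemma wordProd_cons (b : Bool) (l : List Bool) :
    wordProd A B (b :: l) = tmul (if b then A else B) (wordProd A B l) := rfl

lemma wordProd_append (l₁ l₂ : List Bool) :
    wordProd A B (l₁ ++ l₂) = tmul (wordProd A B l₁) (wordProd A B l₂) := by
  induction l₁ with
  | nil => rw [wordProd_nil, tmul_id_left]; rfl
  | cons b l ih =>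
    show wordProd A B (b :: (l ++ l₂)) = _
    rw [wordProd_cons, ih, wordProd_cons, tmul_assoc]

lemma wordProd_replicate_false (i : ℕ) :
    wordProd A B (List.replicate i false) = tpow B i := by
  induction i with
  | zero => rfl
  | succ i ih =>
    rw [List.replicate_succ, wordProd_cons, ih]
    rfl

lemma prodTup_cons {k : ℕ} (i : ℕ) (t : Fin k → ℕ) :
    prodTup A B (Fin.cons i t) = tmul (tmul A (tpow B i)) (prodTup A B t) := by
  unfold prodTup
  rw [List.ofFn_succ]
  simp only [Fin.cons_zero, Fin.cons_succ]
  rfl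

lemma prodTup_single (t : Fin 1 → ℕ) :
    prodTup A B t = tmul A (tpow B (t 0)) := by
  have ht1 : t = fun _ => t 0 := by funext j; rw [Subsingleton.elim j 0]
  rw [ht1]
  unfold prodTup
  simp only [List.ofFn_succ, List.ofFn_zero, List.foldr]
  rw [tmul_id_right]

lemma prodTup_le_tpow : ∀ (k : ℕ) (t : Fin k → ℕ),
    prodTup A B t ≤ tpow (tadd A B) ((∑ j, t j) + k) := by
  intro k
  induction k with
  | zero =>
    intro t
    have h1 : prodTup A B t = idMat n := by simp [prodTup]
    have h2 : (∑ j, t j) + 0 = 0 := by simp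
    rw [h1, h2, show (tpow (tadd A B) 0 : Fin n → Fin n → K) = idMat n from rfl]
  | succ k ih =>
    intro t
    have heq : prodTup A B t
        = tmul (tmul A (tpow B (t 0))) (prodTup A B (fun j : Fin k => t j.succ)) := by
      conv_lhs => rw [← Fin.cons_self_tail t]
      rw [prodTup_cons]
      rfl
    rw [heq]
    have h1 : tmul A (tpow B (t 0)) ≤ tpow (tadd A B) (t 0 + 1) := by
      rw [show (tpow (tadd A B) (t 0 + 1) : Fin n → Fin n → K)
          = tmul (tadd A B) (tpow (tadd A B) (t 0)) from rfl]
      exact tmul_le_tmul (le_tadd_left A B) (tpow_mono (le_tadd_right A B) _)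
    have h2 := ih (fun j : Fin k => t j.succ)
    have h3 := tmul_le_tmul h1 h2
    rw [← tpow_add] at h3
    have h4 : (t 0 + 1) + ((∑ j : Fin k, t j.succ) + k) = (∑ j, t j) + (k + 1) := by
      rw [Fin.sum_univ_succ]; omega
    rwa [h4] at h3

/-- Structure of an arbitrary word: either all `B`'s, or `B^i · (A B^{i₁} ⋯ A B^{i_k})`. -/
lemma word_structure : ∀ l : List Bool,
    (wordProd A B l = tpow B l.length) ∨
    (∃ (i k : ℕ) (t : Fin (k + 1) → ℕ),
      i + ((∑ j, t j) + (k + 1)) = l.length ∧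
      wordProd A B l = tmul (tpow B i) (prodTup A B t)) := by
  intro l
  induction l with
  | nil => exact Or.inl rfl
  | cons b l ih =>
    cases b with
    | false =>
      rcases ih with h | ⟨i, k, t, hsum, hprod⟩
      · left
        rw [wordProd_cons, h]
        rfl
      · right
        refine ⟨i + 1, k, t, by simp [← hsum]; omega, ?_⟩
        rw [wordProd_cons, hprod]
        simp only [Bool.false_eq_true, if_false]
        have : tpow B (i + 1) = tmul B (tpow B i) := rfl
        rw [this, tmul_assoc]
    | true =>
      rcases ih with h | ⟨i, k, t, hsum, hprod⟩
      · right
        refine ⟨0, 0, fun _ => l.length, by simp, ?_⟩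
        rw [wordProd_cons, h, prodTup_single]
        simp only [if_true]
        rw [show (tpow B 0 : Fin n → Fin n → K) = idMat n from rfl, tmul_id_left]
      · right
        refine ⟨0, k + 1, Fin.cons i t, ?_, ?_⟩
        · rw [Fin.sum_univ_succ]
          simp only [Fin.cons_zero, Fin.cons_succ]
          simp only [List.length_cons]
          omega
        · rw [wordProd_cons, hprod, prodTup_cons]
          simp only [if_true]
          rw [show (tpow B 0 : Fin n → Fin n → K) = idMat n from rfl, tmul_id_left,
            ← tmul_assoc]

/-- A word starting with `A` is a `prodTup`. -/
lemma word_parse (l : List Bool) :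
    ∃ (k : ℕ) (t : Fin (k + 1) → ℕ),
      (∑ j, t j) + (k + 1) = l.length + 1 ∧
      wordProd A B (true :: l) = prodTup A B t := by
  rcases word_structure A B l with h | ⟨i, k, t, hsum, hprod⟩
  · refine ⟨0, fun _ => l.length, by simp, ?_⟩
    rw [wordProd_cons, h, prodTup_single]
    simp
  · refine ⟨k + 1, Fin.cons i t, ?_, ?_⟩
    · rw [Fin.sum_univ_succ]
      simp only [Fin.cons_zero, Fin.cons_succ]
      omega
    · rw [wordProd_cons, hprod, prodTup_cons, ← tmul_assoc]
      simp

/-! ### Expansion of `(A ⊕ B)^m` into words -/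

lemma expand (m : ℕ) :
    tpow (tadd A B) m =
      (Finset.univ : Finset (Fin m → Bool)).sup
        (fun c => wordProd A B (List.ofFn c)) := by
  induction m with
  | zero =>
    apply le_antisymm
    · refine le_trans ?_ (Finset.le_sup (Finset.mem_univ (fun _ : Fin 0 => false)))
      simp [List.ofFn_zero, wordProd_nil, tpow]
    · refine Finset.sup_le fun c _ => ?_
      simp [List.ofFn_zero, wordProd_nil, tpow]
  | succ m ih =>
    have step : tpow (tadd A B) (m + 1)
        = (Finset.univ : Finset (Fin m → Bool)).sup
            (fun c => tmul A (wordProd A B (List.ofFn c)))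
          ⊔ (Finset.univ : Finset (Fin m → Bool)).sup
            (fun c => tmul B (wordProd A B (List.ofFn c))) := by
      show tmul (tadd A B) (tpow (tadd A B) m) = _
      rw [ih, tadd_eq_sup, tmul_sup_left, tmul_finsetSup_right, tmul_finsetSup_right]
    rw [step]
    apply le_antisymm
    · apply sup_le
      · refine Finset.sup_le fun c _ => ?_
        refine le_trans ?_ (Finset.le_sup (Finset.mem_univ (Fin.cons true c)))
        rw [List.ofFn_succ]
        simp only [Fin.cons_zero, Fin.cons_succ]
        rw [wordProd_cons]
        simp
      · refine Finset.sup_le fun c _ => ?_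
        refine le_trans ?_ (Finset.le_sup (Finset.mem_univ (Fin.cons false c)))
        rw [List.ofFn_succ]
        simp only [Fin.cons_zero, Fin.cons_succ]
        rw [wordProd_cons]
        simp
    · refine Finset.sup_le fun d _ => ?_
      rw [List.ofFn_succ, wordProd_cons]
      cases hd : d 0 with
      | true =>
        refine le_trans ?_ le_sup_left
        refine le_trans ?_ (Finset.le_sup (Finset.mem_univ (fun j => d j.succ)))
        simp
      | false =>
        refine le_trans ?_ le_sup_right
        refine le_trans ?_ (Finset.le_sup (Finset.mem_univ (fun j => d j.succ)))
        simp

end Aux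

/-- Tropical binomial identity for traces:
`tr (A ⊕ B)^m = tr B^m ⊕ ⨁_{k=1}^m ⨁_{i₁+⋯+i_k = m−k} tr(A B^{i₁} ⋯ A B^{i_k})`. -/
theorem trace_binomial_identity {n : ℕ} (A B : Fin n → Fin n → K) (m : ℕ) (hm : 1 ≤ m) :
    ttr (tpow (tadd A B) m) =
      ttr (tpow B m) ⊔
        (Finset.Icc 1 m).sup fun k =>
          (Finset.Nat.antidiagonalTuple k (m - k)).sup fun t => ttr (prodTup A B t) := by
  apply le_antisymm
  · -- LHS ≤ RHS : expand into words
    rw [expand A B m, ttr_finsetSup]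
    refine Finset.sup_le fun c _ => ?_
    by_cases hc : ∀ j, c j = false
    · -- all-false word is B^m
      have : (List.ofFn c) = List.replicate m false := by
        have : c = fun _ => false := funext hc
        rw [this, List.ofFn_const]
      rw [this, wordProd_replicate_false]
      exact le_sup_left
    · -- there is an A in the word: rotate it to the front and parse
      push_neg at hc
      obtain ⟨j, hj⟩ := hc
      have hj' : c j = true := Bool.ne_false_iff.mp hj
      have hmem : true ∈ List.ofFn c := List.mem_ofFn.mpr ⟨j, hj'⟩
      obtain ⟨s, r, hsr⟩ := List.append_of_mem hmem
      have hlen : (List.ofFn c).length = m := by simp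
      -- rotate: tr(word) = tr (true :: (r ++ s))
      have hrot : ttr (wordProd A B (List.ofFn c))
          = ttr (wordProd A B (true :: (r ++ s))) := by
        rw [hsr, wordProd_append, ttr_tmul_comm, ← wordProd_append]
        rfl
      obtain ⟨k, t, hsum, hprod⟩ := word_parse A B (r ++ s)
      have hlen2 : (r ++ s).length + 1 = m := by
        rw [hsr] at hlen
        simp at hlen ⊢
        omega
      rw [hrot, hprod]
      have hk : k + 1 ∈ Finset.Icc 1 m := by
        rw [Finset.mem_Icc]
        omega
      have ht : t ∈ Finset.Nat.antidiagonalTuple (k + 1) (m - (k + 1)) := by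
        rw [Finset.Nat.mem_antidiagonalTuple]
        omega
      refine le_trans ?_ le_sup_right
      have step1 : ttr (prodTup A B t)
          ≤ (Finset.Nat.antidiagonalTuple (k + 1) (m - (k + 1))).sup
              fun t => ttr (prodTup A B t) :=
        Finset.le_sup (f := fun t => ttr (prodTup A B t)) ht
      have step2 : ((Finset.Nat.antidiagonalTuple (k + 1) (m - (k + 1))).sup
              fun t => ttr (prodTup A B t))
          ≤ (Finset.Icc 1 m).sup fun k =>
              (Finset.Nat.antidiagonalTuple k (m - k)).sup fun t => ttr (prodTup A B t) :=
        Finset.le_sup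
          (f := fun k => (Finset.Nat.antidiagonalTuple k (m - k)).sup
            fun t => ttr (prodTup A B t)) hk
      exact le_trans step1 step2
  · -- RHS ≤ LHS : monotonicity
    apply sup_le
    · exact ttr_mono (tpow_mono (le_tadd_right A B) m)
    · refine Finset.sup_le fun k hk => Finset.sup_le fun t ht => ?_
      rw [Finset.mem_Icc] at hk
      rw [Finset.Nat.mem_antidiagonalTuple] at ht
      have : (∑ j, t j) + k = m := by omega
      calc ttr (prodTup A B t) ≤ ttr (tpow (tadd A B) ((∑ j, t j) + k)) :=
            ttr_mono (prodTup_le_tpow A B k t)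
        _ = ttr (tpow (tadd A B) m) := by rw [this]
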